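/- Let X be a separable Banach space over ℝ that has the π-property but does not have a finite dimensional decomposition. Then there exists an increasing sequence (X_i)_{i=1}^∞ of finite-dimensional subspaces of X such that: (a) sup_i λ(X_i, X) < ∞; (b) the closure of ⋃_{i=1}^∞ X_i equals X; and (c) for every strictly increasing sequence of indices (i_n)_{n=1}^∞ and every sequence of linear projections P_n : X_{i_{n+1}} → X_{i_n} (linear maps whose restriction to X_{i_n} is the identity), sup_{k,l ∈ ℕ, k < l} ‖P_k P_{k+1} ⋯ P_{l-1} P_l‖ = ∞. -/

import Mathlib

open Filter Topology Metric Set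

noncomputable section

/-- `X` has the π-property: there is a sequence of finite-rank continuous linear
projections converging strongly to the identity. -/
def HasPiProperty (X : Type*) [NormedAddCommGroup X] [NormedSpace ℝ X] : Prop :=
  ∃ T : ℕ → X →L[ℝ] X,
    (∀ n, (T n).comp (T n) = T n) ∧
    (∀ n, FiniteDimensional ℝ (LinearMap.range (T n : X →ₗ[ℝ] X))) ∧
    (∀ x : X, Tendsto (fun n => ‖x - T n x‖) atTop (𝓝 0))

/-- `X` has a finite dimensional decomposition: moreover the projections commute,
`T n ∘ T m = T (min m n)`. -/
def HasFDDProperty (X : Type*) [NormedAddCommGroup X] [NormedSpace ℝ X] : Prop :=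
  ∃ T : ℕ → X →L[ℝ] X,
    (∀ n, FiniteDimensional ℝ (LinearMap.range (T n : X →ₗ[ℝ] X))) ∧
    (∀ x : X, Tendsto (fun n => ‖x - T n x‖) atTop (𝓝 0)) ∧
    (∀ m n, (T n).comp (T m) = T (min m n))

/-- Relative projection constant of a subspace `Y` of `X`. -/
def relProjConst {X : Type*} [NormedAddCommGroup X] [NormedSpace ℝ X]
    (Y : Submodule ℝ X) : ℝ :=
  sInf {c : ℝ | ∃ P : X →L[ℝ] X, P.comp P = P ∧ LinearMap.range (P : X →ₗ[ℝ] X) = Y ∧ ‖P‖ = c}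

/-- Composition `P k ∘ P (k+1) ∘ ⋯ ∘ P (k+j)` of the projections
`P n : W (n+1) → W n`, as a map `W (k+j+1) → W k`. -/
def projChain {X : Type*} [NormedAddCommGroup X] [NormedSpace ℝ X]
    {W : ℕ → Submodule ℝ X} (P : (n : ℕ) → (W (n+1) →L[ℝ] W n)) :
    (k j : ℕ) → (W (k + j + 1) →L[ℝ] W k)
  | k, 0 => P k
  | k, j+1 => (projChain P k j).comp (P (k + j + 1))

/-- Condition (c): for every subsequence and every sequence of projections between
consecutive subspaces of the subsequence, the norms of the compositions
`P k ∘ ⋯ ∘ P l` (with `k < l`) are unbounded. -/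
def ChainCondition {X : Type*} [NormedAddCommGroup X] [NormedSpace ℝ X]
    (V : ℕ → Submodule ℝ X) : Prop :=
  ∀ idx : ℕ → ℕ, StrictMono idx →
    ∀ P : (n : ℕ) → ((V (idx (n+1)) : Submodule ℝ X) →L[ℝ] V (idx n)),
      (∀ (n : ℕ) (x : X) (hx : x ∈ V (idx n)) (hx' : x ∈ V (idx (n+1))),
        ((P n ⟨x, hx'⟩ : V (idx n)) : X) = x) →
      ∀ C : ℝ, ∃ k j : ℕ, C < ‖projChain (W := fun n => V (idx n)) P k (j + 1)‖

end

set_option synthInstance.maxHeartbeats 1000000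
set_option maxHeartbeats 1000000
set_option linter.unusedVariables false
set_option linter.deprecated false

noncomputable section
variable {X : Type*} [NormedAddCommGroup X] [NormedSpace ℝ X]

lemma exists_findim_proj (E : Submodule ℝ X) [FiniteDimensional ℝ E] :
    ∃ R : X →L[ℝ] X, (∀ x ∈ E, R x = x) ∧ ∀ x, R x ∈ E := by
  classical
  set d := Module.finrank ℝ E
  let b : Module.Basis (Fin d) ℝ E := Module.finBasis ℝ E
  have hcont : ∀ i : Fin d, ∃ g : X →L[ℝ] ℝ,
      ∀ x : E, g x = (b.coord i) x := by
    intro i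
    obtain ⟨g, hg, -⟩ := exists_extension_norm_eq E
      (LinearMap.toContinuousLinearMap (b.coord i))
    exact ⟨g, fun x => by simpa using hg x⟩
  choose g hg using hcont
  refine ⟨∑ i : Fin d, (g i).smulRight ((b i : X)), ?_, ?_⟩
  · intro x hx
    have := b.sum_repr ⟨x, hx⟩
    have hcoe : ∑ i : Fin d, (b.repr ⟨x, hx⟩ i) • (b i : X) = x := by
      exact_mod_cast congrArg (Submodule.subtype E) this
    simp only [ContinuousLinearMap.sum_apply, ContinuousLinearMap.smulRight_apply]
    have : ∀ i : Fin d, g i x • (b i : X) = (b.repr ⟨x, hx⟩ i) • (b i : X) := by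
      intro i
      have := hg i ⟨x, hx⟩
      simp only [Module.Basis.coord_apply] at this
      rw [this]
    rw [Finset.sum_congr rfl fun i _ => this i, hcoe]
  · intro x
    simp only [ContinuousLinearMap.sum_apply, ContinuousLinearMap.smulRight_apply]
    exact Submodule.sum_mem E fun i _ => Submodule.smul_mem E _ (b i).2



/-- Pointwise convergence to the identity is uniform on finite-dimensional subspaces. -/
lemma unif_on_findim (T : ℕ → X →L[ℝ] X)
    (htend : ∀ x : X, Tendsto (fun n => ‖x - T n x‖) atTop (𝓝 0))
    (E : Submodule ℝ X) [FiniteDimensional ℝ E] {ε : ℝ} (hε : 0 < ε) :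
    ∃ n, ∀ x ∈ E, ‖T n x - x‖ ≤ ε * ‖x‖ := by
  classical
  set d := Module.finrank ℝ E
  let b : Module.Basis (Fin d) ℝ E := Module.finBasis ℝ E
  let c : Fin d → (E →L[ℝ] ℝ) := fun i => LinearMap.toContinuousLinearMap (b.coord i)
  set K : ℝ := ∑ i : Fin d, ‖c i‖ with hK
  have hK0 : 0 ≤ K := Finset.sum_nonneg fun i _ => (c i).opNorm_nonneg
  have hδ : 0 < ε / (K + 1) := by positivity
  have hev : ∀ᶠ n in atTop, ∀ i : Fin d, ‖(b i : X) - T n (b i : X)‖ ≤ ε / (K + 1) := by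
    rw [eventually_all]
    intro i
    have := htend (b i : X)
    filter_upwards [this.eventually (eventually_le_nhds hδ)] with n hn using hn
  obtain ⟨n, hn⟩ := hev.exists
  refine ⟨n, fun x hx => ?_⟩
  have hrepr : ∑ i : Fin d, (b.repr ⟨x, hx⟩ i) • (b i : X) = x := by
    exact_mod_cast congrArg (Submodule.subtype E) (b.sum_repr ⟨x, hx⟩)
  have hdiff : T n x - x = ∑ i : Fin d, (b.repr ⟨x, hx⟩ i) • (T n (b i : X) - (b i : X)) := by
    conv_lhs => rw [← hrepr]
    rw [map_sum, ← Finset.sum_sub_distrib]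
    exact Finset.sum_congr rfl fun i _ => by rw [map_smul, smul_sub]
  have hcoord : ∀ i : Fin d, |b.repr ⟨x, hx⟩ i| ≤ ‖c i‖ * ‖x‖ := by
    intro i
    have : b.repr ⟨x, hx⟩ i = c i ⟨x, hx⟩ := by simp [c]
    rw [this]
    calc |c i ⟨x, hx⟩| = ‖c i ⟨x, hx⟩‖ := rfl
      _ ≤ ‖c i‖ * ‖(⟨x, hx⟩ : E)‖ := (c i).le_opNorm _
      _ = ‖c i‖ * ‖x‖ := rfl
  calc ‖T n x - x‖ = ‖∑ i : Fin d, (b.repr ⟨x, hx⟩ i) • (T n (b i : X) - (b i : X))‖ := by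
        rw [hdiff]
    _ ≤ ∑ i : Fin d, ‖(b.repr ⟨x, hx⟩ i) • (T n (b i : X) - (b i : X))‖ :=
        norm_sum_le _ _
    _ ≤ ∑ i : Fin d, (‖c i‖ * ‖x‖) * (ε / (K + 1)) := by
        refine Finset.sum_le_sum fun i _ => ?_
        rw [norm_smul]
        have h1 : ‖T n (b i : X) - (b i : X)‖ ≤ ε / (K + 1) := by
          rw [norm_sub_rev]; exact hn i
        exact mul_le_mul (hcoord i) h1 (norm_nonneg _)
          (mul_nonneg (c i).opNorm_nonneg (norm_nonneg _))
    _ = K * ‖x‖ * (ε / (K + 1)) := by rw [← Finset.sum_mul, ← Finset.sum_mul]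
    _ ≤ ε * ‖x‖ := by
        rw [div_eq_mul_inv]
        have h2 : K * (K + 1)⁻¹ ≤ 1 := by
          rw [mul_inv_le_iff₀ (by linarith)]; linarith
        calc K * ‖x‖ * (ε * (K + 1)⁻¹) = K * (K + 1)⁻¹ * (ε * ‖x‖) := by ring
          _ ≤ 1 * (ε * ‖x‖) :=
            mul_le_mul_of_nonneg_right h2 (mul_nonneg hε.le (norm_nonneg x))
          _ = ε * ‖x‖ := one_mul _


/-- The perturbation lemma: given the π-property data with uniform bound `M`, every
finite-dimensional subspace is contained in the range of a projection of norm `≤ 3 * M`. -/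
lemma exists_good_proj [CompleteSpace X] (T : ℕ → X →L[ℝ] X)
    (hproj : ∀ n, (T n).comp (T n) = T n)
    (hfin : ∀ n, FiniteDimensional ℝ (LinearMap.range (T n : X →ₗ[ℝ] X)))
    (htend : ∀ x : X, Tendsto (fun n => ‖x - T n x‖) atTop (𝓝 0))
    (M : ℝ) (hM : ∀ n, ‖T n‖ ≤ M)
    (E : Submodule ℝ X) [FiniteDimensional ℝ E] :
    ∃ S : X →L[ℝ] X, S.comp S = S ∧ FiniteDimensional ℝ (LinearMap.range (S : X →ₗ[ℝ] X)) ∧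
      E ≤ LinearMap.range (S : X →ₗ[ℝ] X) ∧ ‖S‖ ≤ 3 * M := by
  obtain ⟨R, hRid, hRmem⟩ := exists_findim_proj E
  have hε : (0:ℝ) < 1 / (2 * (‖R‖ + 1)) := by positivity
  obtain ⟨n, hn⟩ := unif_on_findim T htend E hε
  set A := T n with hA
  set t : X →L[ℝ] X := (1 - A) * R with ht
  have htnorm : ‖t‖ ≤ 1 / 2 := by
    refine ContinuousLinearMap.opNorm_le_bound _ (by norm_num) fun x => ?_
    have h1 : t x = R x - A (R x) := by
      simp [ht, ContinuousLinearMap.mul_apply, ContinuousLinearMap.sub_apply]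
    have h2 : ‖A (R x) - R x‖ ≤ 1 / (2 * (‖R‖ + 1)) * ‖R x‖ := hn (R x) (hRmem x)
    have h3 : ‖R x‖ ≤ ‖R‖ * ‖x‖ := R.le_opNorm x
    have h4 : ‖t x‖ ≤ 1 / (2 * (‖R‖ + 1)) * (‖R‖ * ‖x‖) := by
      rw [h1, norm_sub_rev]
      exact h2.trans (by
        have := mul_le_mul_of_nonneg_left h3 hε.le
        linarith)
    refine h4.trans ?_
    rw [div_mul_eq_mul_div, one_mul, div_mul_eq_mul_div, one_mul]
    rw [div_le_div_iff₀ (by positivity) (by norm_num)]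
    have h5 : 0 ≤ ‖x‖ := norm_nonneg x
    have h6 : 0 ≤ ‖R‖ := norm_nonneg R
    nlinarith
  have htlt : ‖t‖ < 1 := lt_of_le_of_lt htnorm (by norm_num)
  set u : (X →L[ℝ] X)ˣ := Units.oneSub t htlt with hu
  have huval : (u : X →L[ℝ] X) = 1 - t := rfl
  have hone : ‖(1 : X →L[ℝ] X)‖ ≤ 1 := ContinuousLinearMap.norm_id_le
  have huinv : ‖((u⁻¹ : (X →L[ℝ] X)ˣ) : X →L[ℝ] X)‖ ≤ 2 := by
    have : ((u⁻¹ : (X →L[ℝ] X)ˣ) : X →L[ℝ] X) = ∑' m : ℕ, t ^ m := rfl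
    rw [this]
    have hb := tsum_geometric_le_of_norm_lt_one t htlt
    have : (1 - ‖t‖)⁻¹ ≤ 2 := by
      rw [inv_le_comm₀ (by linarith [norm_nonneg t]) (by norm_num)]
      linarith
    linarith
  have hunorm : ‖(u : X →L[ℝ] X)‖ ≤ 3 / 2 := by
    rw [huval]
    calc ‖(1 : X →L[ℝ] X) - t‖ ≤ ‖(1 : X →L[ℝ] X)‖ + ‖t‖ := norm_sub_le _ _
      _ ≤ 3 / 2 := by linarith
  -- `u` acts as `A` on `E`
  have huE : ∀ x ∈ E, (u : X →L[ℝ] X) x = A x := by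
    intro x hx
    have h1 : t x = x - A x := by
      simp [ht, ContinuousLinearMap.mul_apply, ContinuousLinearMap.sub_apply, hRid x hx]
    rw [huval]
    simp [ContinuousLinearMap.sub_apply, h1]
  set S : X →L[ℝ] X := ((u⁻¹ : (X →L[ℝ] X)ˣ) : X →L[ℝ] X) * A * (u : X →L[ℝ] X) with hS
  have hAA : A * A = A := hproj n
  have hSS : S * S = S := by
    rw [hS]
    simp only [mul_assoc]
    rw [u.mul_inv_cancel_left, show A * (A * (u : X →L[ℝ] X)) = (A * A) * (u : X →L[ℝ] X) from
      (mul_assoc _ _ _).symm, hAA]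
  refine ⟨S, hSS, ?_, ?_, ?_⟩
  · have hsub : LinearMap.range (S : X →ₗ[ℝ] X) ≤
        (LinearMap.range (A : X →ₗ[ℝ] X)).map (((u⁻¹ : (X →L[ℝ] X)ˣ) : X →L[ℝ] X) : X →ₗ[ℝ] X) := by
      rintro y ⟨x, rfl⟩
      exact ⟨A ((u : X →L[ℝ] X) x), LinearMap.mem_range_self _ _, rfl⟩
    haveI := hfin n
    exact Submodule.finiteDimensional_of_le hsub
  · intro x hx
    have h1 : S x = x := by
      have h2 : S x = ((u⁻¹ : (X →L[ℝ] X)ˣ) : X →L[ℝ] X) (A ((u : X →L[ℝ] X) x)) := rfl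
      rw [h2, huE x hx]
      have h3 : A (A x) = A x := by
        have := congrArg (fun f => f x) hAA
        simpa [ContinuousLinearMap.mul_apply] using this
      rw [h3]
      have h4 : ((u⁻¹ : (X →L[ℝ] X)ˣ) : X →L[ℝ] X) (A x) = x := by
        rw [← huE x hx]
        have h5 := congrArg (fun f : X →L[ℝ] X => f x) u.inv_mul
        simp only [ContinuousLinearMap.mul_apply, ContinuousLinearMap.one_apply] at h5
        exact h5
      exact h4
    exact h1 ▸ LinearMap.mem_range_self _ x
  · calc ‖S‖ ≤ ‖((u⁻¹ : (X →L[ℝ] X)ˣ) : X →L[ℝ] X) * A‖ * ‖(u : X →L[ℝ] X)‖ :=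
        norm_mul_le _ _
      _ ≤ ‖((u⁻¹ : (X →L[ℝ] X)ˣ) : X →L[ℝ] X)‖ * ‖A‖ * ‖(u : X →L[ℝ] X)‖ := by
        have := norm_mul_le ((u⁻¹ : (X →L[ℝ] X)ˣ) : X →L[ℝ] X) A
        exact mul_le_mul_of_nonneg_right this (norm_nonneg _)
      _ ≤ 2 * M * (3 / 2) := by
        have hM0 : 0 ≤ M := le_trans (norm_nonneg (T 0)) (hM 0)
        have hAn : ‖A‖ ≤ M := hM n
        have h1 : ‖((u⁻¹ : (X →L[ℝ] X)ˣ) : X →L[ℝ] X)‖ * ‖A‖ ≤ 2 * M :=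
          mul_le_mul huinv hAn (norm_nonneg _) (by norm_num)
        exact mul_le_mul h1 hunorm (norm_nonneg _) (by positivity)
      _ = 3 * M := by ring
-- chain condition part, appended to work.lean for testing
/-- Unbundled composition `p k ∘ p (k+1) ∘ ⋯ ∘ p (k+j)`. -/
def chainAux {X : Type*} [NormedAddCommGroup X] [NormedSpace ℝ X]
    (p : ℕ → X →L[ℝ] X) : ℕ → ℕ → X →L[ℝ] X
  | k, 0 => p k
  | k, j+1 => (chainAux p k j).comp (p (k + j + 1))

lemma chainAux_peel {X : Type*} [NormedAddCommGroup X] [NormedSpace ℝ X]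
    (p : ℕ → X →L[ℝ] X) (k j : ℕ) :
    chainAux p k (j + 1) = (p k).comp (chainAux p (k + 1) j) := by
  induction j with
  | zero => rfl
  | succ j ih =>
    show (chainAux p k (j + 1)).comp (p (k + (j + 1) + 1)) = _
    rw [ih]
    show ((p k).comp (chainAux p (k + 1) j)).comp (p (k + j + 2)) =
      (p k).comp ((chainAux p (k + 1) j).comp (p ((k + 1) + j + 1)))
    rw [ContinuousLinearMap.comp_assoc, show (k + 1) + j + 1 = k + j + 2 by omega]

lemma proj_fix {X : Type*} [NormedAddCommGroup X] [NormedSpace ℝ X]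
    (Q : X →L[ℝ] X) (hQ : Q.comp Q = Q) {x : X} (hx : x ∈ LinearMap.range (Q : X →ₗ[ℝ] X)) :
    Q x = x := by
  obtain ⟨y, rfl⟩ := hx
  have := congrArg (fun f : X →L[ℝ] X => f y) hQ
  simpa using this

lemma chain_condition_of_not_FDD {X : Type*} [NormedAddCommGroup X] [NormedSpace ℝ X]
    (hfdd : ¬ HasFDDProperty X)
    (V : ℕ → Submodule ℝ X) (hmono : Monotone V)
    (hfinV : ∀ i, FiniteDimensional ℝ (V i))
    (C₀ : ℝ) (Q : ℕ → X →L[ℝ] X)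
    (hQ : ∀ i, (Q i).comp (Q i) = Q i) (hQr : ∀ i, LinearMap.range (Q i : X →ₗ[ℝ] X) = V i)
    (hQn : ∀ i, ‖Q i‖ ≤ C₀)
    (hdense : closure (⋃ i, (V i : Set X)) = Set.univ) :
    ChainCondition V := by
  intro idx hidx P hP
  by_contra hcon
  push_neg at hcon
  obtain ⟨C₁, hC₁⟩ := hcon
  apply hfdd
  set W : ℕ → Submodule ℝ X := fun n => V (idx n) with hW
  haveI : ∀ n, FiniteDimensional ℝ (W n) := fun n => hfinV (idx n)
  have hWmono : ∀ {a b : ℕ}, a ≤ b → W a ≤ W b := fun h => hmono (hidx.monotone h)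
  -- the projections of `X` onto the subspaces `W j`
  have hQmem : ∀ j x, Q (idx j) x ∈ W j := fun j x => by
    have h : Q (idx j) x ∈ LinearMap.range (Q (idx j) : X →ₗ[ℝ] X) := ⟨x, rfl⟩
    rwa [hQr (idx j)] at h
  have hQid : ∀ j x, x ∈ W j → Q (idx j) x = x := fun j x hx =>
    proj_fix _ (hQ (idx j)) (by rwa [hQr (idx j)])
  set Qc : ∀ j : ℕ, X →L[ℝ] (W j) := fun j =>
    (Q (idx j)).codRestrict (W j) (hQmem j) with hQc
  have hQc_apply : ∀ j x, ((Qc j x : X)) = Q (idx j) x := fun j x => rfl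
  have hQc_id : ∀ j x (hx : x ∈ W j), Qc j x = ⟨x, hx⟩ := fun j x hx =>
    Subtype.ext (by rw [hQc_apply, hQid j x hx])
  have hQc_norm : ∀ j x, ‖Qc j x‖ ≤ C₀ * ‖x‖ := fun j x => by
    rw [show ‖Qc j x‖ = ‖Q (idx j) x‖ from rfl]
    exact le_trans ((Q (idx j)).le_opNorm x) (by
      exact mul_le_mul_of_nonneg_right (hQn (idx j)) (norm_nonneg x))
  set p : ℕ → X →L[ℝ] X := fun n =>
    (W n).subtypeL.comp ((P n).comp (Qc (n+1))) with hp
  have hp_mem : ∀ n x, p n x ∈ W n := fun n x => (P n (Qc (n+1) x)).2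
  have hp_id : ∀ n x, x ∈ W n → p n x = x := by
    intro n x hx
    have hx' : x ∈ W (n+1) := hWmono (Nat.le_succ n) hx
    show ((P n (Qc (n+1) x) : W n) : X) = x
    rw [hQc_id (n+1) x hx']
    exact hP n x hx hx'
  -- identification of `chainAux p` with `projChain P`
  have hchain_eq : ∀ k j x, chainAux p k j x =
      ((projChain (W := W) P k j (Qc (k + j + 1) x) : W k) : X) := by
    intro k j
    induction j with
    | zero => intro x; rfl
    | succ j ih =>
      intro x
      show chainAux p k j (p (k + j + 1) x) = _
      rw [ih (p (k + j + 1) x)]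
      have hmem : p (k + j + 1) x ∈ W (k + j + 1) := hp_mem _ x
      have h1 : Qc (k + j + 1) (p (k + j + 1) x) = P (k + j + 1) (Qc (k + j + 2) x) := by
        rw [hQc_id _ _ hmem]
        rfl
      rw [h1]
      rfl
  have hchain_mem : ∀ k j x, chainAux p k j x ∈ W k := by
    intro k j x; rw [hchain_eq]; exact (projChain (W := W) P k j _).2
  have hchain_id : ∀ k j x, x ∈ W k → chainAux p k j x = x := by
    intro k j
    induction j with
    | zero => intro x hx; exact hp_id k x hx
    | succ j ih =>
      intro x hx
      show chainAux p k j (p (k + j + 1) x) = x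
      rw [hp_id (k + j + 1) x (hWmono (by omega) hx)]
      exact ih x hx
  have hC₁0 : 0 ≤ C₁ := le_trans (ContinuousLinearMap.opNorm_nonneg _) (hC₁ 0 0)
  have hC₀0 : 0 ≤ C₀ := le_trans (norm_nonneg (Q 0)) (hQn 0)
  set C₂ : ℝ := C₁ * C₀ with hC₂
  have hC₂0 : 0 ≤ C₂ := mul_nonneg hC₁0 hC₀0
  have hchain_norm : ∀ k j x, ‖chainAux p k (j + 1) x‖ ≤ C₂ * ‖x‖ := by
    intro k j x
    rw [hchain_eq]
    calc ‖((projChain (W := W) P k (j+1) (Qc (k + (j+1) + 1) x) : W k) : X)‖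
        = ‖projChain (W := W) P k (j+1) (Qc (k + (j+1) + 1) x)‖ := rfl
      _ ≤ ‖projChain (W := W) P k (j+1)‖ * ‖Qc (k + (j+1) + 1) x‖ :=
          ContinuousLinearMap.le_opNorm _ _
      _ ≤ C₁ * (C₀ * ‖x‖) := mul_le_mul (hC₁ k j) (hQc_norm _ x) (norm_nonneg _) hC₁0
      _ = C₂ * ‖x‖ := by rw [hC₂]; ring
  -- the "chain from m to l" operators
  set D : ℕ → ℕ → X →L[ℝ] X := fun m l => chainAux p m (l - m) with hD
  have hDrec : ∀ m l, m + 1 ≤ l → D m l = (p m).comp (D (m+1) l) := by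
    intro m l hl
    have h1 : l - m = (l - (m+1)) + 1 := by omega
    show chainAux p m (l - m) = (p m).comp (chainAux p (m+1) (l - (m+1)))
    rw [h1, chainAux_peel]
  have hD_norm : ∀ m l x, m + 2 ≤ l → ‖D m l x‖ ≤ C₂ * ‖x‖ := by
    intro m l x hl
    have h1 : l - m = (l - m - 1) + 1 := by omega
    show ‖chainAux p m (l - m) x‖ ≤ C₂ * ‖x‖
    rw [h1]
    exact hchain_norm m _ x
  have hD_mem : ∀ m l x, D m l x ∈ W m := fun m l x => hchain_mem m _ x
  have hD_id : ∀ m l x, x ∈ W m → D m l x = x := fun m l x hx => hchain_id m _ x hx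
  -- limits along an ultrafilter
  set U : Ultrafilter ℕ := Filter.hyperfilter ℕ with hUdef
  have hU : (U : Filter ℕ) ≤ atTop := by
    rw [← Nat.cofinite_eq_atTop]; exact Filter.hyperfilter_le_cofinite
  have hlim : ∀ m x, ∃ y : X, y ∈ W m ∧ ‖y‖ ≤ C₂ * ‖x‖ ∧
      Tendsto (fun l => D m l x) U (𝓝 y) := by
    intro m x
    set K : Set X := ((↑) : W m → X) '' (Metric.closedBall 0 (C₂ * ‖x‖)) with hKdef
    have hK : IsCompact K := (isCompact_closedBall _ _).image continuous_subtype_val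
    have hmemK : ∀ᶠ l in (U : Filter ℕ), D m l x ∈ K := by
      refine Filter.Eventually.filter_mono hU ?_
      filter_upwards [Filter.eventually_ge_atTop (m + 2)] with l hl
      refine ⟨⟨D m l x, hD_mem m l x⟩, ?_, rfl⟩
      rw [Metric.mem_closedBall, dist_zero_right]
      exact hD_norm m l x hl
    have hle : (U.map (fun l => D m l x) : Filter X) ≤ 𝓟 K := by
      rw [Filter.le_principal_iff]
      exact Filter.mem_map.mpr hmemK
    obtain ⟨y, hyK, hy⟩ := hK.ultrafilter_le_nhds (U.map (fun l => D m l x)) hle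
    obtain ⟨z, hz, rfl⟩ := hyK
    refine ⟨z, z.2, ?_, hy⟩
    · rw [Metric.mem_closedBall, dist_zero_right] at hz
      exact hz
  choose S hSmem hSnorm hStend using hlim
  -- `S m` is linear
  have hadd : ∀ m x y, S m (x + y) = S m x + S m y := by
    intro m x y
    refine tendsto_nhds_unique ?_ ((hStend m x).add (hStend m y))
    have : (fun l => D m l (x + y)) = fun l => D m l x + D m l y := by
      funext l; exact map_add _ x y
    rw [← this]
    exact hStend m (x + y)
  have hsmul : ∀ m (c : ℝ) x, S m (c • x) = c • S m x := by
    intro m c x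
    refine tendsto_nhds_unique ?_ ((hStend m x).const_smul c)
    have : (fun l => D m l (c • x)) = fun l => c • D m l x := by
      funext l; exact map_smul _ c x
    rw [← this]
    exact hStend m (c • x)
  set Smap : ℕ → X →L[ℝ] X := fun m =>
    LinearMap.mkContinuous
      { toFun := S m, map_add' := hadd m, map_smul' := hsmul m } C₂
      (fun x => hSnorm m x) with hSmap
  have hSmap_apply : ∀ m x, Smap m x = S m x := fun m x => rfl
  -- `S m` is the identity on `W m`
  have hid : ∀ m x, x ∈ W m → S m x = x := by
    intro m x hx
    refine tendsto_nhds_unique (hStend m x) ?_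
    have : (fun l => D m l x) = fun _ => x := by
      funext l; exact hD_id m l x hx
    rw [this]
    exact tendsto_const_nhds
  -- the recursion `S m = p m ∘ S (m+1)`
  have hrec : ∀ m x, S m x = p m (S (m+1) x) := by
    intro m x
    refine tendsto_nhds_unique (hStend m x) ?_
    have h2 : Tendsto (fun l => p m (D (m+1) l x)) U (𝓝 (p m (S (m+1) x))) :=
      (((p m).continuous.tendsto _).comp (hStend (m+1) x))
    refine h2.congr' ?_
    refine Filter.Eventually.filter_mono hU ?_
    filter_upwards [Filter.eventually_ge_atTop (m + 1)] with l hl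
    rw [hDrec m l hl]
    rfl
  have hF : ∀ j m x, S m (S (m + j) x) = S m x := by
    intro j
    induction j with
    | zero => intro m x; exact hid m (S m x) (hSmem m x)
    | succ j ih =>
      intro m x
      have h1 : S (m + (j+1)) x = S ((m+1) + j) x := by
        congr 1; omega
      rw [h1, hrec m (S ((m+1) + j) x), ih (m+1) x, ← hrec m x]
  -- assemble the FDD
  refine ⟨Smap, ?_, ?_, ?_⟩
  · intro m
    have hsub : LinearMap.range (Smap m : X →ₗ[ℝ] X) ≤ W m := by
      rintro y ⟨x, rfl⟩; exact hSmem m x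
    exact Submodule.finiteDimensional_of_le hsub
  · intro x
    rw [Metric.tendsto_atTop]
    intro ε hε
    have hδ : (0:ℝ) < ε / (2 * (C₂ + 1)) := by positivity
    have hx : x ∈ closure (⋃ i, (V i : Set X)) := by rw [hdense]; trivial
    rw [Metric.mem_closure_iff] at hx
    obtain ⟨y, hy, hdist⟩ := hx (ε / (2 * (C₂ + 1))) hδ
    obtain ⟨s, ⟨i, rfl⟩, hyi⟩ := hy
    refine ⟨i, fun m hm => ?_⟩
    have hyW : y ∈ W m := by
      refine hmono (le_trans (le_trans hm (hidx.le_apply)) (le_refl _)) hyi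
    have h1 : S m y = y := hid m y hyW
    have h2 : ‖x - S m x‖ ≤ ‖x - y‖ + ‖S m y - S m x‖ := by
      have : x - S m x = (x - y) + (S m y - S m x) := by rw [h1]; abel
      rw [this]; exact norm_add_le _ _
    have h3 : ‖S m y - S m x‖ ≤ C₂ * ‖y - x‖ := by
      have : S m y - S m x = S m (y - x) := by
        rw [show y - x = y + (-1 : ℝ) • x by rw [neg_one_smul]; abel, hadd, hsmul,
          neg_one_smul]
        abel
      rw [this]; exact hSnorm m (y - x)
    have h4 : ‖x - y‖ < ε / (2 * (C₂ + 1)) := by rwa [← dist_eq_norm]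
    have h5 : ‖y - x‖ < ε / (2 * (C₂ + 1)) := by rwa [norm_sub_rev]
    have h6 : ‖x - S m x‖ < ε := by
      have hb : C₂ * ‖y - x‖ ≤ C₂ * (ε / (2 * (C₂ + 1))) :=
        mul_le_mul_of_nonneg_left h5.le hC₂0
      have : (1 + C₂) * (ε / (2 * (C₂ + 1))) < ε := by
        rw [div_eq_mul_inv]
        have h7 : (1 + C₂) * (2 * (C₂ + 1))⁻¹ < 1 := by
          rw [mul_inv_lt_iff₀ (by linarith)]; linarith
        calc (1 + C₂) * (ε * (2 * (C₂ + 1))⁻¹)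
            = ((1 + C₂) * (2 * (C₂ + 1))⁻¹) * ε := by ring
          _ < 1 * ε := by exact mul_lt_mul_of_pos_right h7 hε
          _ = ε := one_mul ε
      calc ‖x - S m x‖ ≤ ‖x - y‖ + ‖S m y - S m x‖ := h2
        _ ≤ ‖x - y‖ + C₂ * ‖y - x‖ := by linarith
        _ < ε / (2 * (C₂ + 1)) + C₂ * (ε / (2 * (C₂ + 1))) := by linarith
        _ = (1 + C₂) * (ε / (2 * (C₂ + 1))) := by ring
        _ < ε := this
    rw [Real.dist_eq, sub_zero, abs_of_nonneg (norm_nonneg _)]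
    exact h6
  · intro m n
    ext x
    rw [ContinuousLinearMap.comp_apply]
    rw [hSmap_apply, hSmap_apply, hSmap_apply]
    rcases le_total n m with h | h
    · have h1 : m = n + (m - n) := by omega
      rw [min_eq_right h]
      calc S n (S m x) = S n (S (n + (m - n)) x) := by rw [← h1]
        _ = S n x := hF (m - n) n x
    · rw [min_eq_left h]
      exact hid n (S m x) (hWmono h (hSmem m x))

end

theorem exists_subspaces_of_pi_property_without_FDD
    (X : Type*) [NormedAddCommGroup X] [NormedSpace ℝ X]
    [CompleteSpace X] [TopologicalSpace.SeparableSpace X]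
    (hpi : HasPiProperty X) (hfdd : ¬ HasFDDProperty X) :
    ∃ V : ℕ → Submodule ℝ X,
      Monotone V ∧ (∀ i, FiniteDimensional ℝ (V i)) ∧
      -- (a) sup_i λ(X_i, X) < ∞
      ((∀ i, ∃ P : X →L[ℝ] X, P.comp P = P ∧ LinearMap.range (P : X →ₗ[ℝ] X) = V i) ∧
        ∃ C : ℝ, ∀ i, relProjConst (V i) ≤ C) ∧
      -- (b) the union of the subspaces is dense in X
      closure (⋃ i, (V i : Set X)) = Set.univ ∧
      -- (c) compositions of projections along any subsequence are unbounded
      ChainCondition V := by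
  classical
  obtain ⟨T, hTproj, hTfin, hTtend⟩ := hpi
  -- a uniform bound on the norms of the `T n`
  have hptws : ∀ x : X, ∃ C, ∀ n, ‖T n x‖ ≤ C := by
    intro x
    obtain ⟨B, hB⟩ := (hTtend x).bddAbove_range
    refine ⟨B + ‖x‖, fun n => ?_⟩
    have h1 : ‖x - T n x‖ ≤ B := hB ⟨n, rfl⟩
    calc ‖T n x‖ = ‖x - (x - T n x)‖ := by rw [sub_sub_cancel]
      _ ≤ ‖x‖ + ‖x - T n x‖ := norm_sub_le _ _
      _ ≤ B + ‖x‖ := by linarith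
  obtain ⟨M, hM⟩ := banach_steinhaus hptws
  set C : ℝ := 3 * M with hC
  -- a countable dense set
  have : Nonempty X := ⟨0⟩
  obtain ⟨u, hu⟩ := TopologicalSpace.exists_dense_seq X
  -- the recursive construction of the projections
  set prp : (X →L[ℝ] X) → Prop := fun S =>
    S.comp S = S ∧ FiniteDimensional ℝ (LinearMap.range (S : X →ₗ[ℝ] X)) ∧ ‖S‖ ≤ C with hprp
  have base : ∃ S₀ : X →L[ℝ] X, prp S₀ ∧ Submodule.span ℝ {u 0} ≤ LinearMap.range (S₀ : X →ₗ[ℝ] X) := by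
    obtain ⟨S, h1, h2, h3, h4⟩ :=
      exists_good_proj T hTproj hTfin hTtend M hM (Submodule.span ℝ {u 0})
    exact ⟨S, ⟨h1, h2, h4⟩, h3⟩
  have step : ∀ S : X →L[ℝ] X, prp S → ∀ n : ℕ, ∃ S' : X →L[ℝ] X,
      prp S' ∧ (LinearMap.range (S : X →ₗ[ℝ] X) ⊔ Submodule.span ℝ {u n}) ≤ LinearMap.range (S' : X →ₗ[ℝ] X) := by
    intro S hS n
    haveI := hS.2.1
    obtain ⟨S', h1, h2, h3, h4⟩ :=
      exists_good_proj T hTproj hTfin hTtend M hM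
        (LinearMap.range (S : X →ₗ[ℝ] X) ⊔ Submodule.span ℝ {u n})
    exact ⟨S', ⟨h1, h2, h4⟩, h3⟩
  let g : ℕ → {S : X →L[ℝ] X // prp S} := fun n =>
    Nat.rec ⟨base.choose, base.choose_spec.1⟩
      (fun k ih => ⟨(step ih.1 ih.2 (k+1)).choose, (step ih.1 ih.2 (k+1)).choose_spec.1⟩) n
  have hlink : ∀ k : ℕ,
      (LinearMap.range ((g k).1 : X →ₗ[ℝ] X) ⊔ Submodule.span ℝ {u (k+1)}) ≤ LinearMap.range ((g (k+1)).1 : X →ₗ[ℝ] X) :=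
    fun k => (step (g k).1 (g k).2 (k+1)).choose_spec.2
  have hbase : Submodule.span ℝ {u 0} ≤ LinearMap.range ((g 0).1 : X →ₗ[ℝ] X) := base.choose_spec.2
  set V : ℕ → Submodule ℝ X := fun n => LinearMap.range ((g n).1 : X →ₗ[ℝ] X) with hV
  have hmono : Monotone V :=
    monotone_nat_of_le_succ fun n => le_trans le_sup_left (hlink n)
  have hfinV : ∀ i, FiniteDimensional ℝ (V i) := fun i => (g i).2.2.1
  have huV : ∀ n, u n ∈ V n := by
    intro n
    cases n with
    | zero => exact hbase (Submodule.mem_span_singleton_self (u 0))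
    | succ k =>
      exact hlink k (le_sup_right (α := Submodule ℝ X)
        (Submodule.mem_span_singleton_self (u (k+1))))
  have hdense : closure (⋃ i, (V i : Set X)) = Set.univ := by
    refine Set.eq_univ_of_univ_subset ?_
    have h1 : Set.range u ⊆ ⋃ i, (V i : Set X) := by
      rintro y ⟨n, rfl⟩
      exact Set.mem_iUnion.mpr ⟨n, huV n⟩
    calc (Set.univ : Set X) = closure (Set.range u) := (hu.closure_range).symm
      _ ⊆ closure (⋃ i, (V i : Set X)) := closure_mono h1
  refine ⟨V, hmono, hfinV, ⟨?_, ⟨C, ?_⟩⟩, hdense, ?_⟩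
  · exact fun i => ⟨(g i).1, (g i).2.1, rfl⟩
  · intro i
    have hmem : ‖(g i).1‖ ∈
        {c : ℝ | ∃ P : X →L[ℝ] X, P.comp P = P ∧ LinearMap.range (P : X →ₗ[ℝ] X) = V i ∧ ‖P‖ = c} :=
      ⟨(g i).1, (g i).2.1, rfl, rfl⟩
    have hbdd : BddBelow
        {c : ℝ | ∃ P : X →L[ℝ] X, P.comp P = P ∧ LinearMap.range (P : X →ₗ[ℝ] X) = V i ∧ ‖P‖ = c} := by
      refine ⟨0, ?_⟩
      rintro c ⟨P, -, -, rfl⟩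
      exact norm_nonneg P
    exact le_trans (csInf_le hbdd hmem) (g i).2.2.2
  · exact chain_condition_of_not_FDD hfdd V hmono hfinV C (fun i => (g i).1)
      (fun i => (g i).2.1) (fun i => rfl) (fun i => (g i).2.2.2) hdense
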